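/- Let T1, T2 be two O-operators on a pre-Lie algebra (g,·) associated to a representation (V;ρ,μ), and suppose T2 is invertible. If T1 and T2 are compatible, then N = T1 ∘ T2⁻¹ : g → g is a Nijenhuis operator on the pre-Lie algebra (g,·). -/
import Mathlib


variable {K : Type*} [Field K] [CharZero K]
variable {g : Type*} [AddCommGroup g] [Module K g]
variable {V : Type*} [AddCommGroup V] [Module K V]

/-- The pre-Lie identity for a bilinear multiplication. -/
def IsPreLie (mul : g →ₗ[K] g →ₗ[K] g) : Prop :=
  ∀ x y z : g, mul (mul x y) z - mul x (mul y z) = mul (mul y x) z - mul y (mul x z)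

/-- A Nijenhuis operator on a pre-Lie algebra. -/
def IsNijenhuis (mul : g →ₗ[K] g →ₗ[K] g) (N : g →ₗ[K] g) : Prop :=
  ∀ x y : g, mul (N x) (N y) = N (mul (N x) y + mul x (N y) - N (mul x y))

/-- A representation `(V; ρ, μ)` of a pre-Lie algebra `(g, mul)`. -/
def IsRep (mul : g →ₗ[K] g →ₗ[K] g) (ρ μ : g →ₗ[K] Module.End K V) : Prop :=
  (∀ (x y : g) (v : V), ρ (mul x y - mul y x) v = ρ x (ρ y v) - ρ y (ρ x v)) ∧
  (∀ (x y : g) (v : V), ρ x (μ y v) - μ y (ρ x v) = μ (mul x y) v - μ y (μ x v))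

/-- An `O`-operator on a pre-Lie algebra associated to a representation. -/
def IsOOp (mul : g →ₗ[K] g →ₗ[K] g) (ρ μ : g →ₗ[K] Module.End K V)
    (T : V →ₗ[K] g) : Prop :=
  ∀ u v : V, mul (T u) (T v) = T (ρ (T u) v + μ (T v) u)

/-- Two `O`-operators are compatible if every linear combination is an `O`-operator. -/
def OCompat (mul : g →ₗ[K] g →ₗ[K] g) (ρ μ : g →ₗ[K] Module.End K V)
    (T₁ T₂ : V →ₗ[K] g) : Prop :=
  ∀ k₁ k₂ : K, IsOOp mul ρ μ (k₁ • T₁ + k₂ • T₂)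

/-- If `T₁, T₂` are compatible `O`-operators and `T₂` is invertible (with inverse `S`),
then `N = T₁ ∘ T₂⁻¹` is a Nijenhuis operator on the pre-Lie algebra. -/
theorem compatible_oOperators_give_nijenhuis
    (mul : g →ₗ[K] g →ₗ[K] g) (hmul : IsPreLie mul)
    (ρ μ : g →ₗ[K] Module.End K V) (hrep : IsRep mul ρ μ)
    (T₁ T₂ : V →ₗ[K] g) (h₁ : IsOOp mul ρ μ T₁) (h₂ : IsOOp mul ρ μ T₂)
    (S : g →ₗ[K] V) (hS₁ : T₂ ∘ₗ S = LinearMap.id) (hS₂ : S ∘ₗ T₂ = LinearMap.id)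
    (hcomp : OCompat mul ρ μ T₁ T₂) :
    IsNijenhuis mul (T₁ ∘ₗ S) := by
  intro x y
  have hTS : ∀ z : g, T₂ (S z) = z := fun z => congrArg (fun f => f z) hS₁
  have hST : ∀ v : V, S (T₂ v) = v := fun v => congrArg (fun f => f v) hS₂
  have hmix : ∀ u v : V, mul (T₁ u) (T₂ v) + mul (T₂ u) (T₁ v)
      = T₁ (ρ (T₂ u) v + μ (T₂ v) u) + T₂ (ρ (T₁ u) v + μ (T₁ v) u) := by
    intro u v
    have h := hcomp 1 1 u v
    simp only [LinearMap.add_apply, LinearMap.smul_apply, one_smul, map_add,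
      LinearMap.add_apply] at h
    have e1 := h₁ u v
    have e2 := h₂ u v
    simp only [map_add] at e1 e2 ⊢
    linear_combination (norm := module) h - e1 - e2
  have e1 := h₁ (S x) (S y)
  have emix := hmix (S x) (S y)
  rw [hTS x, hTS y] at emix
  have e2 : mul x y = T₂ (ρ x (S y) + μ y (S x)) := by
    have := h₂ (S x) (S y); rw [hTS x, hTS y] at this; exact this
  simp only [LinearMap.comp_apply]
  rw [e2, hST]
  have hinner : mul (T₁ (S x)) y + mul x (T₁ (S y)) - T₁ (ρ x (S y) + μ y (S x))
      = T₂ (ρ (T₁ (S x)) (S y) + μ (T₁ (S y)) (S x)) := by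
    simp only [map_add] at emix ⊢
    linear_combination (norm := module) emix
  rw [hinner, hST]
  exact e1
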